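/- Let G be a second-countable locally compact Hausdorff group and let (α,𝔲): G ↷ A and (β,𝔳): G ↷ B be twisted actions on separable unital C*-algebras. Let (φ,u): (A,α,𝔲) → (B,β,𝔳) be a cocycle morphism with φ injective and unital. Then (φ,u) is asymptotically unitarily equivalent to a cocycle conjugacy if and only if the following holds: for all finite sets F_A ⊆ A and F_B ⊆ B, every compact set K ⊆ G and every ε > 0, there exists a norm-continuous path of unitaries z : [0,1] → U(B) with z_0 = 1 such that (a) max_{0≤t≤1} ‖z_t·φ(a) − φ(a)·z_t‖ ≤ ε for all a ∈ F_A; (b) dist(z_1*·b·z_1, φ(A)) ≤ ε for all b ∈ F_B; and (c) max_{g∈K} max_{0≤t≤1} ‖u_g − z_t·u_g·β_g(z_t)*‖ ≤ ε. -/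

import Mathlib

/-!
Common definitions: twisted actions of a locally compact group on a unital C*-algebra,
cocycle morphisms between them, and (approximate/asymptotic) unitary equivalence.
-/

noncomputable section

/-- `φ⁺(w) = φ(w) + 1 - φ(1)` for a (not necessarily unital) *-homomorphism between unital
C*-algebras. -/
def plusMap {A B : Type*} [CStarAlgebra A] [CStarAlgebra B] (φ : A →⋆ₙₐ[ℂ] B) (w : A) : B :=
  φ w + 1 - φ 1

/-- A twisted action `(α, 𝔲) : G ↷ A` of a topological group on a unital C*-algebra:
a point-norm continuous map `α : G → Aut(A)` and a norm-continuous map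
`𝔲 : G × G → U(A)` satisfying the twisted action identities. -/
structure TwistedAction (G A : Type*) [Group G] [TopologicalSpace G] [CStarAlgebra A] where
  α : G → (A ≃⋆ₐ[ℂ] A)
  α_cont : ∀ a : A, Continuous fun g => α g a
  u : G → G → A
  u_mem : ∀ s t, u s t ∈ unitary A
  u_cont : Continuous fun p : G × G => u p.1 p.2
  α_one : ∀ a : A, α 1 a = a
  α_mul : ∀ s t : G, ∀ a : A, α s (α t a) = u s t * α (s * t) a * star (u s t)
  u_one_left : ∀ s, u 1 s = 1
  u_one_right : ∀ s, u s 1 = 1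
  u_cocycle : ∀ r s t : G, α r (u s t) * u r (s * t) = u r s * u (r * s) t

/-- A cocycle morphism `(φ, u) : (A, α, 𝔲) → (B, β, 𝔳)` between twisted actions on unital
C*-algebras: a *-homomorphism together with a norm-continuous map `u : G → U(B)` satisfying
the equivariance condition and the cocycle identity. -/
structure CocycleMorphism {G A B : Type*} [Group G] [TopologicalSpace G]
    [CStarAlgebra A] [CStarAlgebra B]
    (Sa : TwistedAction G A) (Sb : TwistedAction G B) where
  φ : A →⋆ₙₐ[ℂ] B
  u : G → B
  u_mem : ∀ g, u g ∈ unitary B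
  u_cont : Continuous u
  equivariance : ∀ (g : G) (a : A), u g * Sb.α g (φ a) * star (u g) = φ (Sa.α g a)
  cocycle : ∀ g h : G,
    plusMap φ (Sa.u g h) = u g * Sb.α g (u h) * Sb.u g h * star (u (g * h))

/-- `(ψ, v) ⪅ᵤ (φ, u)` : the pair `(ψ, v)` is approximately unitarily dominated by `(φ, u)`,
i.e. for every `ε > 0`, finite `F ⊆ A` and compact `K ⊆ G` there is a unitary `w ∈ U(B)` with
`‖ψ(a) - w φ(a) w*‖ ≤ ε` on `F` and `‖v_g - w u_g β_g(w)*‖ ≤ ε` on `K`. -/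
def ApproxUDom {G A B : Type*} [Group G] [TopologicalSpace G]
    [CStarAlgebra A] [CStarAlgebra B] (Sb : TwistedAction G B)
    (ψ : A → B) (v : G → B) (φ : A → B) (u : G → B) : Prop :=
  ∀ ε > (0 : ℝ), ∀ F : Finset A, ∀ K : Set G, IsCompact K →
    ∃ w ∈ unitary B,
      (∀ a ∈ F, ‖ψ a - w * φ a * star w‖ ≤ ε) ∧
      (∀ g ∈ K, ‖v g - w * u g * star (Sb.α g w)‖ ≤ ε)

/-- `(φ, u) ≈ₐᵤ (ψ, v)` : asymptotic unitary equivalence of pairs, witnessed by a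
norm-continuous path of unitaries `w : [0,∞) → U(B)` with
`lim_t ‖ψ(a) - w_t φ(a) w_t*‖ = 0` and `lim_t max_{g ∈ K} ‖v_g - w_t u_g β_g(w_t)*‖ = 0`. -/
def AsympUEquiv {G A B : Type*} [Group G] [TopologicalSpace G]
    [CStarAlgebra A] [CStarAlgebra B] (Sb : TwistedAction G B)
    (φ : A → B) (u : G → B) (ψ : A → B) (v : G → B) : Prop :=
  ∃ w : ℝ → B, Continuous w ∧ (∀ t, w t ∈ unitary B) ∧
    (∀ a : A,
      Filter.Tendsto (fun t => ‖ψ a - w t * φ a * star (w t)‖) Filter.atTop (nhds 0)) ∧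
    (∀ K : Set G, IsCompact K → ∀ ε > (0 : ℝ), ∀ᶠ t in Filter.atTop,
      ∀ g ∈ K, ‖v g - w t * u g * star (Sb.α g (w t))‖ ≤ ε)

end


namespace AUEAux

variable {B : Type*} [CStarAlgebra B]

lemma norm_sandwich {v w : B} (hv : v ∈ unitary B) (hw : w ∈ unitary B) (x : B) :
    ‖v * x * w‖ = ‖x‖ := by
  rw [CStarRing.norm_mul_mem_unitary _ hw, CStarRing.norm_mem_unitary_mul x hv]

lemma norm_conj {v : B} (hv : v ∈ unitary B) (x : B) : ‖v * x * star v‖ = ‖x‖ :=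
  norm_sandwich hv (Unitary.star_mem hv) x

lemma conj_sub (v x y : B) :
    v * x * star v - v * y * star v = v * (x - y) * star v := by
  rw [mul_sub, sub_mul]

lemma norm_conj_sub {v : B} (hv : v ∈ unitary B) (x y : B) :
    ‖v * x * star v - v * y * star v‖ = ‖x - y‖ := by
  rw [conj_sub, norm_conj hv]

lemma norm_sandwich_sub {v w : B} (hv : v ∈ unitary B) (hw : w ∈ unitary B) (x y : B) :
    ‖v * x * w - v * y * w‖ = ‖x - y‖ := by
  rw [show v * x * w - v * y * w = v * (x - y) * w by rw [mul_sub, sub_mul], norm_sandwich hv hw]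

/-- commutator vs conjugation -/
lemma norm_commutator {z : B} (hz : z ∈ unitary B) (x : B) :
    ‖z * x - x * z‖ = ‖z * x * star z - x‖ := by
  have h : (z * x * star z - x) * z = z * x - x * z := by
    rw [sub_mul, mul_assoc, mul_assoc, Unitary.coe_star_mul_self ⟨z, hz⟩]
    rw [mul_one]
  rw [← h, CStarRing.norm_mul_mem_unitary _ hz]

lemma star_mul_self_one {v : B} (hv : v ∈ unitary B) : star v * v = 1 :=
  Unitary.star_mul_self_of_mem hv

lemma mul_star_self_one {v : B} (hv : v ∈ unitary B) : v * star v = 1 :=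
  Unitary.mul_star_self_of_mem hv

lemma conj_conj_cancel {v : B} (hv : v ∈ unitary B) (x : B) :
    star v * (v * x * star v) * v = x := by
  have h1 := star_mul_self_one hv
  calc star v * (v * x * star v) * v = (star v * v) * x * (star v * v) := by
        simp only [mul_assoc]
    _ = x := by rw [h1, one_mul, mul_one]

/-- `z x z* - x = v* (w x w* - v x v*) v` for `z = v* w`. -/
lemma conj_diff_eq {v w : B} (hv : v ∈ unitary B) (x : B) :
    (star v * w) * x * star (star v * w) - x
      = star v * (w * x * star w - v * x * star v) * v := by
  have h2 : (star v * w) * x * star (star v * w) = star v * (w * x * star w) * v := by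
    simp only [star_mul, star_star, mul_assoc]
  rw [h2, mul_sub, sub_mul]
  rw [conj_conj_cancel hv]

lemma telescope_bound {f : ℕ → B} {N : ℕ}
    (h : ∀ k, N ≤ k → ‖f (k + 1) - f k‖ ≤ (1/2 : ℝ) ^ (k + 1)) :
    ∀ m, N ≤ m → ‖f m - f N‖ ≤ (1/2 : ℝ) ^ N - (1/2 : ℝ) ^ m := by
  intro m hm
  induction m, hm using Nat.le_induction with
  | base => simp
  | succ m hm ih =>
    have h1 := h m hm
    have h2 : ‖f (m + 1) - f N‖ ≤ ‖f (m + 1) - f m‖ + ‖f m - f N‖ :=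
      norm_sub_le_norm_sub_add_norm_sub _ _ _
    have h3 : (1/2 : ℝ) ^ (m + 1) = (1/2 : ℝ) ^ m / 2 := by
      rw [pow_succ]; ring
    linarith
end AUEAux

namespace AUEAux

open Filter Topology

variable {B : Type*} [CStarAlgebra B]

lemma tendsto_norm_sub_le' {f : ℕ → B} {L : B}
    (hL : Tendsto f atTop (nhds L)) {N : ℕ} {D : ℝ}
    (h : ∀ m, N ≤ m → ‖f m - f N‖ ≤ D) : ‖L - f N‖ ≤ D := by
  have h1 : Tendsto (fun m => ‖f m - f N‖) atTop (nhds ‖L - f N‖) :=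
    ((hL.sub tendsto_const_nhds).norm)
  exact le_of_tendsto h1 (eventually_atTop.2 ⟨N, h⟩)

lemma tail_bound {f : ℕ → B} {L : B} (hL : Tendsto f atTop (nhds L)) {N : ℕ}
    (h : ∀ k, N ≤ k → ‖f (k + 1) - f k‖ ≤ (1/2 : ℝ) ^ (k + 1)) :
    ∀ n, N ≤ n → ‖L - f n‖ ≤ (1/2 : ℝ) ^ n := by
  intro n hn
  refine tendsto_norm_sub_le' hL (N := n) fun m hm => ?_
  refine (telescope_bound (fun k hk => h k (hn.trans hk)) m hm).trans ?_
  have : (0:ℝ) ≤ (1/2 : ℝ) ^ m := by positivity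
  linarith

lemma map_unitary {β : B ≃⋆ₐ[ℂ] B} {v : B} (hv : v ∈ unitary B) : β v ∈ unitary B := by
  rw [Unitary.mem_iff] at hv ⊢
  constructor
  · rw [← map_star, ← map_mul, hv.1, map_one]
  · rw [← map_star, ← map_mul, hv.2, map_one]

lemma continuousOn_union_closed {X Y : Type*} [TopologicalSpace X] [TopologicalSpace Y]
    {f : X → Y} {s t : Set X} (hs : IsClosed s) (ht : IsClosed t)
    (hfs : ContinuousOn f s) (hft : ContinuousOn f t) : ContinuousOn f (s ∪ t) := by
  intro x hx
  have key : ∀ (q : Set X), IsClosed q → ContinuousOn f q → ContinuousWithinAt f q x := by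
    intro q hq hfq
    by_cases hxq : x ∈ q
    · exact hfq x hxq
    · unfold ContinuousWithinAt
      have hbot : 𝓝[q] x = ⊥ := by
        rw [← Filter.not_neBot, ← mem_closure_iff_nhdsWithin_neBot, hq.closure_eq]
        exact hxq
      rw [hbot]
      exact tendsto_bot
  exact (key s hs hfs).union (key t ht hft)

lemma eventually_le_of_tendsto_zero {ι : Type*} {l : Filter ι} {f : ι → ℝ}
    (h : Tendsto f l (nhds 0)) {ε : ℝ} (hε : 0 < ε) : ∀ᶠ x in l, f x ≤ ε :=
  h.eventually (eventually_le_nhds hε)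

lemma tendsto_zero_of_eventually_le {f : ℝ → ℝ} (h0 : ∀ t, 0 ≤ f t)
    (h : ∀ ε > (0:ℝ), ∀ᶠ t in atTop, f t ≤ ε) : Tendsto f atTop (nhds 0) := by
  rw [show nhds (0:ℝ) = nhds 0 from rfl]
  refine Metric.tendsto_atTop.2 fun ε hε => ?_
  obtain ⟨N, hN⟩ := eventually_atTop.1 (h (ε/2) (by linarith))
  exact ⟨N, fun t ht => by
    rw [Real.dist_eq, sub_zero, abs_of_nonneg (h0 t)]
    exact lt_of_le_of_lt (hN t ht) (by linarith)⟩

end AUEAux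
set_option linter.unusedSectionVars false
namespace AUEAux

open Filter Topology

section Main

variable {G A B : Type*} [Group G] [TopologicalSpace G] [IsTopologicalGroup G]
    [LocallyCompactSpace G] [SecondCountableTopology G] [T2Space G]
    [CStarAlgebra A] [CStarAlgebra B]
    [TopologicalSpace.SeparableSpace A] [TopologicalSpace.SeparableSpace B]

/-- The approximation condition (RHS of the theorem). -/
def Cond (Sα : TwistedAction G A) (Sβ : TwistedAction G B) (P : CocycleMorphism Sα Sβ) : Prop :=
  ∀ (FA : Finset A) (FB : Finset B) (K : Set G), IsCompact K → ∀ ε > (0 : ℝ),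
    ∃ z : ℝ → B, Continuous z ∧ (∀ t, z t ∈ unitary B) ∧ z 0 = 1 ∧
      (∀ a ∈ FA, ∀ t ∈ Set.Icc (0 : ℝ) 1, ‖z t * P.φ a - P.φ a * z t‖ ≤ ε) ∧
      (∀ b ∈ FB, Metric.infDist (star (z 1) * b * z 1) (Set.range P.φ) ≤ ε) ∧
      (∀ g ∈ K, ∀ t ∈ Set.Icc (0 : ℝ) 1,
        ‖P.u g - z t * P.u g * star (Sβ.α g (z t))‖ ≤ ε)

variable {Sα : TwistedAction G A} {Sβ : TwistedAction G B} {P : CocycleMorphism Sα Sβ}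

lemma forward
    (h : ∃ Θ : CocycleMorphism Sα Sβ, Function.Bijective Θ.φ ∧
      AsympUEquiv Sβ P.φ P.u Θ.φ Θ.u) : Cond Sα Sβ P := by
  obtain ⟨Θ, hbij, w, hwc, hwu, hwa, hwK⟩ := h
  intro FA FB K hK ε hε
  -- eventual bounds on the conjugating path
  have h1 : ∀ᶠ r in atTop, ∀ a ∈ FA, ‖Θ.φ a - w r * P.φ a * star (w r)‖ ≤ ε / 2 := by
    rw [Finset.eventually_all]
    exact fun a _ => eventually_le_of_tendsto_zero (hwa a) (by linarith)
  have h2 : ∀ᶠ r in atTop, ∀ g ∈ K, ‖Θ.u g - w r * P.u g * star (Sβ.α g (w r))‖ ≤ ε / 2 :=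
    hwK K hK (ε / 2) (by linarith)
  obtain ⟨s, hs⟩ := eventually_atTop.1 (h1.and h2)
  have hss := hs s le_rfl
  -- elements mapping onto `w s • b • w s⋆`
  set c : B → A := fun b => Function.surjInv hbij.2 (w s * b * star (w s)) with hcdef
  have hc : ∀ b, Θ.φ (c b) = w s * b * star (w s) := fun b => Function.surjInv_eq hbij.2 _
  have h3 : ∀ᶠ r in atTop, ∀ b ∈ FB, ‖Θ.φ (c b) - w r * P.φ (c b) * star (w r)‖ ≤ ε := by
    rw [Finset.eventually_all]
    exact fun b _ => eventually_le_of_tendsto_zero (hwa (c b)) hε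
  obtain ⟨r₀, hr₀⟩ := eventually_atTop.1 h3
  set r : ℝ := max r₀ s with hrdef
  have hrs : s ≤ r := le_max_right _ _
  -- the path
  set ρ : ℝ → ℝ := fun t => s + max 0 (min t 1) * (r - s) with hρdef
  have hρcont : Continuous ρ := by fun_prop
  have hρge : ∀ t, s ≤ ρ t := by
    intro t
    have h4 : 0 ≤ max 0 (min t 1) * (r - s) :=
      mul_nonneg (le_max_left _ _) (by linarith)
    simp only [hρdef]; linarith
  have hρt : ∀ t ∈ Set.Icc (0:ℝ) 1, ρ t = s + t * (r - s) := by
    intro t ht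
    simp only [hρdef, min_eq_left ht.2, max_eq_right ht.1]
  refine ⟨fun t => star (w s) * w (ρ t), by fun_prop, ?_, ?_, ?_, ?_, ?_⟩
  · exact fun t => mul_mem (Unitary.star_mem (hwu s)) (hwu _)
  · show star (w s) * w (ρ 0) = 1
    have : ρ 0 = s := by rw [hρt 0 (by constructor <;> norm_num)]; ring
    rw [this, star_mul_self_one (hwu s)]
  · -- approximate commutation
    intro a ha t ht
    rw [norm_commutator (mul_mem (Unitary.star_mem (hwu s)) (hwu _)) (P.φ a),
      conj_diff_eq (hwu s), norm_sandwich (Unitary.star_mem (hwu s)) (hwu s)]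
    have hb1 := (hs (ρ t) (hρge t)).1 a ha
    have hb2 := hss.1 a ha
    calc ‖w (ρ t) * P.φ a * star (w (ρ t)) - w s * P.φ a * star (w s)‖
        ≤ ‖w (ρ t) * P.φ a * star (w (ρ t)) - Θ.φ a‖ + ‖Θ.φ a - w s * P.φ a * star (w s)‖ :=
          norm_sub_le_norm_sub_add_norm_sub _ _ _
      _ ≤ ε / 2 + ε / 2 := by
          rw [← norm_neg (w (ρ t) * P.φ a * star (w (ρ t)) - Θ.φ a), neg_sub]
          exact add_le_add hb1 hb2
      _ = ε := by ring
  · -- conjugating FB into the range of φ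
    intro b hb
    have hρ1 : ρ 1 = r := by rw [hρt 1 (by constructor <;> norm_num)]; ring
    have hkey : star (star (w s) * w (ρ 1)) * b * (star (w s) * w (ρ 1))
        = star (w r) * Θ.φ (c b) * w r := by
      rw [hρ1, hc b]
      simp only [star_mul, star_star, mul_assoc]
    rw [hkey]
    refine le_trans (Metric.infDist_le_dist_of_mem ⟨c b, rfl⟩) ?_
    rw [dist_eq_norm]
    have : star (w r) * Θ.φ (c b) * w r - P.φ (c b)
        = star (w r) * (Θ.φ (c b) - w r * P.φ (c b) * star (w r)) * w r := by
      rw [mul_sub, sub_mul, conj_conj_cancel (hwu r)]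
    rw [this, norm_sandwich (Unitary.star_mem (hwu r)) (hwu r)]
    exact hr₀ r (le_max_left _ _) b hb
  · -- approximately fixing the cocycle
    intro g hg t ht
    set W1 := w s
    set W2 := w (ρ t)
    have hβW1 : Sβ.α g W1 ∈ unitary B := map_unitary (hwu s)
    have hexp : (star W1 * W2) * P.u g * star (Sβ.α g (star W1 * W2))
        = star W1 * (W2 * P.u g * star (Sβ.α g W2)) * Sβ.α g W1 := by
      rw [map_mul, map_star]
      simp only [star_mul, star_star, mul_assoc]
    have hid : P.u g = star W1 * (W1 * P.u g * star (Sβ.α g W1)) * Sβ.α g W1 := by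
      calc P.u g = (star W1 * W1) * P.u g * (star (Sβ.α g W1) * Sβ.α g W1) := by
            rw [star_mul_self_one (hwu s), star_mul_self_one hβW1, one_mul, mul_one]
        _ = _ := by simp only [mul_assoc]
    calc ‖P.u g - (star W1 * W2) * P.u g * star (Sβ.α g (star W1 * W2))‖
        = ‖star W1 * (W1 * P.u g * star (Sβ.α g W1)) * Sβ.α g W1
            - star W1 * (W2 * P.u g * star (Sβ.α g W2)) * Sβ.α g W1‖ := by
          rw [hexp, ← hid]
      _ = ‖(W1 * P.u g * star (Sβ.α g W1)) - (W2 * P.u g * star (Sβ.α g W2))‖ :=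
          norm_sandwich_sub (Unitary.star_mem (hwu s)) hβW1 _ _
      _ ≤ ‖(W1 * P.u g * star (Sβ.α g W1)) - Θ.u g‖ + ‖Θ.u g - (W2 * P.u g * star (Sβ.α g W2))‖ :=
          norm_sub_le_norm_sub_add_norm_sub _ _ _
      _ ≤ ε / 2 + ε / 2 := by
          refine add_le_add ?_ ((hs (ρ t) (hρge t)).2 g hg)
          rw [← norm_neg, neg_sub]
          exact hss.2 g hg
      _ = ε := by ring

end Main
end AUEAux
namespace AUEAux
open Filter Topology
set_option linter.unusedSectionVars false
attribute [local instance] Classical.propDecidable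

section Step

variable {G A B : Type*} [Group G] [TopologicalSpace G] [IsTopologicalGroup G]
    [LocallyCompactSpace G] [SecondCountableTopology G] [T2Space G]
    [CStarAlgebra A] [CStarAlgebra B]
    [TopologicalSpace.SeparableSpace A] [TopologicalSpace.SeparableSpace B]
    {Sα : TwistedAction G A} {Sβ : TwistedAction G B} {P : CocycleMorphism Sα Sβ}

lemma exists_step (hC : Cond Sα Sβ P) (bseq : ℕ → B) (KX : CompactExhaustion G)
    (n : ℕ) (V : B) (S : Finset A) :
    ∃ zc : (ℝ → B) × (ℕ → A),
      Continuous zc.1 ∧ (∀ t, zc.1 t ∈ unitary B) ∧ zc.1 0 = 1 ∧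
      (∀ x ∈ S, ∀ t ∈ Set.Icc (0:ℝ) 1,
        ‖zc.1 t * P.φ x - P.φ x * zc.1 t‖ ≤ (1/2:ℝ)^(n+1)) ∧
      (∀ i ≤ n, ‖star (V * zc.1 1) * bseq i * (V * zc.1 1) - P.φ (zc.2 i)‖ ≤ (1/2:ℝ)^n) ∧
      (∀ g ∈ KX n, ∀ t ∈ Set.Icc (0:ℝ) 1,
        ‖P.u g - zc.1 t * P.u g * star (Sβ.α g (zc.1 t))‖ ≤ (1/2:ℝ)^(n+1)) := by
  obtain ⟨z, hzc, hzu, hz0, hza, hzb, hzK⟩ :=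
    hC S ((Finset.range (n+1)).image fun i => star V * bseq i * V) (KX n)
      (KX.isCompact n) ((1/2:ℝ)^(n+1)) (by positivity)
  have hex : ∀ i : ℕ, ∃ ci : A,
      i ≤ n → ‖star (V * z 1) * bseq i * (V * z 1) - P.φ ci‖ ≤ (1/2:ℝ)^n := by
    intro i
    by_cases hi : i ≤ n
    · have hmem : star V * bseq i * V ∈
          (Finset.range (n+1)).image fun i => star V * bseq i * V :=
        Finset.mem_image_of_mem _ (Finset.mem_range.2 (Nat.lt_succ_of_le hi))
      have hlt : Metric.infDist (star (z 1) * (star V * bseq i * V) * z 1)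
          (Set.range P.φ) < (1/2:ℝ)^n := by
        refine lt_of_le_of_lt (hzb _ hmem) ?_
        have : (1/2:ℝ)^(n+1) = (1/2:ℝ)^n / 2 := by rw [pow_succ]; ring
        have hpos : (0:ℝ) < (1/2:ℝ)^n := by positivity
        linarith
      have hne : (Set.range P.φ).Nonempty := ⟨P.φ 0, 0, rfl⟩
      obtain ⟨y, ⟨ci, rfl⟩, hy⟩ := (Metric.infDist_lt_iff hne).1 hlt
      refine ⟨ci, fun _ => ?_⟩
      have heq : star (V * z 1) * bseq i * (V * z 1)
          = star (z 1) * (star V * bseq i * V) * z 1 := by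
        simp only [star_mul, mul_assoc]
      rw [heq, ← dist_eq_norm]
      exact hy.le
    · exact ⟨Classical.arbitrary _, fun h => absurd h hi⟩
  choose c hc using hex
  exact ⟨(z, c), hzc, hzu, hz0, hza, fun i hi => hc i hi, hzK⟩

/-- Chosen data for one step of the intertwining construction. -/
noncomputable def stepData (hC : Cond Sα Sβ P) (bseq : ℕ → B) (KX : CompactExhaustion G)
    (n : ℕ) (V : B) (S : Finset A) : (ℝ → B) × (ℕ → A) :=
  (exists_step hC bseq KX n V S).choose

lemma stepData_spec (hC : Cond Sα Sβ P) (bseq : ℕ → B) (KX : CompactExhaustion G)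
    (n : ℕ) (V : B) (S : Finset A) :
    Continuous (stepData hC bseq KX n V S).1 ∧
    (∀ t, (stepData hC bseq KX n V S).1 t ∈ unitary B) ∧
    (stepData hC bseq KX n V S).1 0 = 1 ∧
    (∀ x ∈ S, ∀ t ∈ Set.Icc (0:ℝ) 1,
      ‖(stepData hC bseq KX n V S).1 t * P.φ x
        - P.φ x * (stepData hC bseq KX n V S).1 t‖ ≤ (1/2:ℝ)^(n+1)) ∧
    (∀ i ≤ n, ‖star (V * (stepData hC bseq KX n V S).1 1) * bseq i
        * (V * (stepData hC bseq KX n V S).1 1)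
        - P.φ ((stepData hC bseq KX n V S).2 i)‖ ≤ (1/2:ℝ)^n) ∧
    (∀ g ∈ KX n, ∀ t ∈ Set.Icc (0:ℝ) 1,
      ‖P.u g - (stepData hC bseq KX n V S).1 t * P.u g
        * star (Sβ.α g ((stepData hC bseq KX n V S).1 t))‖ ≤ (1/2:ℝ)^(n+1)) :=
  (exists_step hC bseq KX n V S).choose_spec

/-- The recursively-constructed data: unitary so far, accumulated finite set,
and the path/corrections chosen at the previous step. -/
noncomputable def chain (hC : Cond Sα Sβ P) (bseq : ℕ → B) (KX : CompactExhaustion G)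
    (aseq : ℕ → A) : ℕ → B × Finset A × (ℝ → B) × (ℕ → A)
  | 0 => (1, {aseq 0}, fun _ => 1, fun _ => aseq 0)
  | n + 1 =>
    let p := chain hC bseq KX aseq n
    let d := stepData hC bseq KX n p.1 p.2.1
    (p.1 * d.1 1, insert (aseq (n+1)) p.2.1 ∪ (Finset.range (n+1)).image d.2, d)

lemma chain_succ (hC : Cond Sα Sβ P) (bseq : ℕ → B) (KX : CompactExhaustion G)
    (aseq : ℕ → A) (n : ℕ) :
    chain hC bseq KX aseq (n+1) =
      ((chain hC bseq KX aseq n).1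
          * (stepData hC bseq KX n (chain hC bseq KX aseq n).1
              (chain hC bseq KX aseq n).2.1).1 1,
        insert (aseq (n+1)) (chain hC bseq KX aseq n).2.1
          ∪ (Finset.range (n+1)).image
              (stepData hC bseq KX n (chain hC bseq KX aseq n).1
                (chain hC bseq KX aseq n).2.1).2,
        stepData hC bseq KX n (chain hC bseq KX aseq n).1 (chain hC bseq KX aseq n).2.1) :=
  rfl

end Step
end AUEAux
namespace AUEAux
open Filter Topology
set_option linter.unusedSectionVars false
set_option maxHeartbeats 1000000
attribute [local instance] Classical.propDecidable

section Backward

variable {G A B : Type*} [Group G] [TopologicalSpace G] [IsTopologicalGroup G]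
    [LocallyCompactSpace G] [SecondCountableTopology G] [T2Space G]
    [CStarAlgebra A] [CStarAlgebra B]
    [TopologicalSpace.SeparableSpace A] [TopologicalSpace.SeparableSpace B]
    {Sα : TwistedAction G A} {Sβ : TwistedAction G B} {P : CocycleMorphism Sα Sβ}

lemma backward (hinj : Function.Injective P.φ) (hunital : P.φ 1 = 1) (hC : Cond Sα Sβ P) :
    ∃ Θ : CocycleMorphism Sα Sβ, Function.Bijective Θ.φ ∧
      AsympUEquiv Sβ P.φ P.u Θ.φ Θ.u := by
  obtain ⟨aseq, haseq⟩ := TopologicalSpace.exists_dense_seq A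
  obtain ⟨bseq, hbseq⟩ := TopologicalSpace.exists_dense_seq B
  let KX : CompactExhaustion G := CompactExhaustion.choice G
  set C : ℕ → B × Finset A × (ℝ → B) × (ℕ → A) := chain hC bseq KX aseq with hCdef
  set Vn : ℕ → B := fun n => (C n).1 with hVndef
  set Sn : ℕ → Finset A := fun n => (C n).2.1 with hSndef
  set zn : ℕ → ℝ → B := fun n => (C (n+1)).2.2.1 with hzndef
  set cn : ℕ → ℕ → A := fun n => (C (n+1)).2.2.2 with hcndef
  have hV0 : Vn 0 = 1 := rfl
  have hVsucc : ∀ n, Vn (n+1) = Vn n * zn n 1 := fun n => rfl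
  have hSsucc : ∀ n, Sn (n+1)
      = insert (aseq (n+1)) (Sn n) ∪ (Finset.range (n+1)).image (cn n) := fun n => rfl
  have hzspec : ∀ n : ℕ,
      Continuous (zn n) ∧ (∀ t, zn n t ∈ unitary B) ∧ zn n 0 = 1 ∧
      (∀ x ∈ Sn n, ∀ t ∈ Set.Icc (0:ℝ) 1,
        ‖zn n t * P.φ x - P.φ x * zn n t‖ ≤ (1/2:ℝ)^(n+1)) ∧
      (∀ i ≤ n, ‖star (Vn (n+1)) * bseq i * Vn (n+1) - P.φ (cn n i)‖ ≤ (1/2:ℝ)^n) ∧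
      (∀ g ∈ KX n, ∀ t ∈ Set.Icc (0:ℝ) 1,
        ‖P.u g - zn n t * P.u g * star (Sβ.α g (zn n t))‖ ≤ (1/2:ℝ)^(n+1)) := by
    intro n
    exact stepData_spec hC bseq KX n (Vn n) (Sn n)
  -- unitarity of the products
  have hVu : ∀ n, Vn n ∈ unitary B := by
    intro n
    induction n with
    | zero => rw [hV0]; exact one_mem _
    | succ n ih => rw [hVsucc n]; exact mul_mem ih ((hzspec n).2.1 1)
  -- monotonicity of the finite sets
  have hSmono : ∀ m n, m ≤ n → Sn m ⊆ Sn n := by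
    intro m n hmn
    induction n, hmn using Nat.le_induction with
    | base => exact Finset.Subset.refl _
    | succ n hmn ih =>
      refine ih.trans ?_
      rw [hSsucc n]
      exact (Finset.subset_insert _ _).trans Finset.subset_union_left
  have ha_mem : ∀ i n, i ≤ n → aseq i ∈ Sn n := by
    intro i n hin
    refine hSmono i n hin ?_
    cases i with
    | zero => exact Finset.mem_singleton_self _
    | succ i =>
      rw [hSsucc i]
      exact Finset.mem_union_left _ (Finset.mem_insert_self _ _)
  have hc_mem : ∀ n i, i ≤ n → cn n i ∈ Sn (n+1) := by
    intro n i hin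
    rw [hSsucc n]
    exact Finset.mem_union_right _
      (Finset.mem_image_of_mem _ (Finset.mem_range.2 (Nat.lt_succ_of_le hin)))
  -- the approximating sequences
  set F : A → ℕ → B := fun x n => Vn n * P.φ x * star (Vn n) with hFdef
  set uF : G → ℕ → B := fun g n => Vn n * P.u g * star (Sβ.α g (Vn n)) with huFdef
  have hzIcc1 : (1:ℝ) ∈ Set.Icc (0:ℝ) 1 := ⟨zero_le_one, le_refl 1⟩
  have hFstep : ∀ x n, x ∈ Sn n → ‖F x (n+1) - F x n‖ ≤ (1/2:ℝ)^(n+1) := by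
    intro x n hx
    have hexp : F x (n+1) = Vn n * (zn n 1 * P.φ x * star (zn n 1)) * star (Vn n) := by
      simp only [hFdef, hVsucc n, star_mul, mul_assoc]
    rw [hexp, hFdef]
    simp only []
    rw [norm_conj_sub (hVu n), ← norm_commutator ((hzspec n).2.1 1)]
    exact (hzspec n).2.2.2.1 x hx 1 hzIcc1
  have hFbound : ∀ (x : A) (j m n : ℕ), x ∈ Sn j → j ≤ n → n ≤ m →
      ‖F x m - F x n‖ ≤ (1/2:ℝ)^n := by
    intro x j m n hx hjn hnm
    have h1 := telescope_bound (f := F x) (N := n)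
      (fun k hk => hFstep x k (hSmono j k (hjn.trans hk) hx)) m hnm
    have : (0:ℝ) ≤ (1/2:ℝ)^m := by positivity
    linarith
  have hFconj : ∀ (x y : A) (n : ℕ), ‖F x n - F y n‖ = ‖P.φ x - P.φ y‖ := by
    intro x y n
    simp only [hFdef]
    rw [norm_conj_sub (hVu n)]
  have hφcontr : ∀ x y : A, ‖P.φ x - P.φ y‖ ≤ ‖x - y‖ := by
    intro x y
    rw [← map_sub]
    exact NonUnitalStarAlgHom.norm_apply_le P.φ (x - y)
  have half_lt_one : (1/2:ℝ) < 1 := by norm_num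
  have half_nonneg : (0:ℝ) ≤ 1/2 := by norm_num
  -- Cauchy property of F
  have hFCauchy : ∀ x : A, ∃ L, Tendsto (F x) atTop (𝓝 L) := by
    intro x
    refine cauchySeq_tendsto_of_complete ?_
    refine Metric.cauchySeq_iff.2 fun ε hε => ?_
    obtain ⟨j, hj⟩ := haseq.exists_dist_lt x (show (0:ℝ) < ε/4 by linarith)
    obtain ⟨n₀, hn₀⟩ := exists_pow_lt_of_lt_one (show (0:ℝ) < ε/4 by linarith) half_lt_one
    refine ⟨max j n₀, fun m hm n hn => ?_⟩
    have key : ∀ p q, max j n₀ ≤ p → max j n₀ ≤ q → q ≤ p → dist (F x p) (F x q) < ε := by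
      intro p q hp hq hqp
      have h1 : dist (F x p) (F x q) ≤ dist (F x p) (F (aseq j) p)
          + dist (F (aseq j) p) (F (aseq j) q) + dist (F (aseq j) q) (F x q) :=
        dist_triangle4 _ _ _ _
      have h2 : dist (F x p) (F (aseq j) p) < ε/4 := by
        rw [dist_eq_norm, hFconj]
        exact lt_of_le_of_lt (hφcontr _ _) (by rwa [← dist_eq_norm])
      have h4 : dist (F (aseq j) q) (F x q) < ε/4 := by
        rw [dist_comm, dist_eq_norm, hFconj]
        exact lt_of_le_of_lt (hφcontr _ _) (by rwa [← dist_eq_norm])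
      have h3 : dist (F (aseq j) p) (F (aseq j) q) < ε/2 := by
        rw [dist_eq_norm]
        have hb := hFbound (aseq j) j p q (ha_mem j j le_rfl)
          (le_trans (le_max_left _ _) hq) hqp
        have hd : (1/2:ℝ)^q ≤ (1/2:ℝ)^n₀ :=
          pow_le_pow_of_le_one half_nonneg (le_of_lt half_lt_one)
            (le_trans (le_max_right _ _) hq)
        linarith
      linarith
    rcases le_total n m with h | h
    · exact key m n hm hn h
    · rw [dist_comm]; exact key n m hn hm h
  choose Θfun hΘ using hFCauchy
  have hΘtail : ∀ (x : A) (j n : ℕ), x ∈ Sn j → j ≤ n → ‖Θfun x - F x n‖ ≤ (1/2:ℝ)^n := by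
    intro x j n hx hjn
    exact tail_bound (hΘ x) (fun k hk => hFstep x k (hSmono j k (hjn.trans hk) hx)) n le_rfl
  -- algebraic properties of the limit map
  have hFone : ∀ n, F 1 n = 1 := by
    intro n
    simp only [hFdef, hunital, mul_one]
    exact mul_star_self_one (hVu n)
  have hΘone : Θfun 1 = 1 := by
    refine tendsto_nhds_unique (hΘ 1) ?_
    rw [show F (1:A) = fun _ => (1:B) from funext hFone]
    exact tendsto_const_nhds
  have hadd : ∀ x y, Θfun (x + y) = Θfun x + Θfun y := by
    intro x y
    refine tendsto_nhds_unique (hΘ (x + y)) ?_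
    have he : ∀ n, F (x + y) n = F x n + F y n := by
      intro n
      simp only [hFdef, map_add, mul_add, add_mul]
    rw [show F (x + y) = fun n => F x n + F y n from funext he]
    exact (hΘ x).add (hΘ y)
  have hmul : ∀ x y, Θfun (x * y) = Θfun x * Θfun y := by
    intro x y
    refine tendsto_nhds_unique (hΘ (x * y)) ?_
    have he : ∀ n, F (x * y) n = F x n * F y n := by
      intro n
      have h1 : F x n * F y n
          = Vn n * P.φ x * (star (Vn n) * Vn n) * P.φ y * star (Vn n) := by
        simp only [hFdef, mul_assoc]
      rw [h1, star_mul_self_one (hVu n), mul_one]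
      simp only [hFdef, map_mul, mul_assoc]
    rw [show F (x * y) = fun n => F x n * F y n from funext he]
    exact (hΘ x).mul (hΘ y)
  have hsmul : ∀ (c : ℂ) (x : A), Θfun (c • x) = c • Θfun x := by
    intro c x
    refine tendsto_nhds_unique (hΘ (c • x)) ?_
    have he : ∀ n, F (c • x) n = c • F x n := by
      intro n
      simp only [hFdef, map_smul, smul_mul_assoc, mul_smul_comm]
    rw [show F (c • x) = fun n => c • F x n from funext he]
    exact (hΘ x).const_smul c
  have hstar : ∀ x, Θfun (star x) = star (Θfun x) := by
    intro x
    refine tendsto_nhds_unique (hΘ (star x)) ?_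
    have he : ∀ n, F (star x) n = star (F x n) := by
      intro n
      simp only [hFdef, map_star, star_mul, star_star, mul_assoc]
    rw [show F (star x) = fun n => star (F x n) from funext he]
    exact (hΘ x).star
  have hzero : Θfun 0 = 0 := by
    refine tendsto_nhds_unique (hΘ 0) ?_
    have he : ∀ n, F (0:A) n = 0 := by
      intro n
      simp only [hFdef, map_zero, zero_mul, mul_zero]
    rw [show F (0:A) = fun _ => (0:B) from funext he]
    exact tendsto_const_nhds
  set Θhom : A →⋆ₙₐ[ℂ] B :=
    { toFun := Θfun
      map_smul' := hsmul
      map_zero' := hzero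
      map_add' := hadd
      map_mul' := hmul
      map_star' := hstar } with hΘhomdef
  have hΘapp : ∀ x, Θhom x = Θfun x := fun x => rfl
  -- the limit map is isometric
  have hΘnorm : ∀ x, ‖Θfun x‖ = ‖x‖ := by
    intro x
    have h1 : Tendsto (fun n => ‖F x n‖) atTop (𝓝 ‖Θfun x‖) := (hΘ x).norm
    have h2 : ∀ n, ‖F x n‖ = ‖x‖ := by
      intro n
      simp only [hFdef]
      rw [norm_conj (hVu n)]
      exact NonUnitalStarAlgHom.norm_map P.φ hinj x
    have h3 : Tendsto (fun n => ‖F x n‖) atTop (𝓝 ‖x‖) := by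
      simpa only [h2] using (tendsto_const_nhds : Tendsto (fun _ : ℕ => ‖x‖) atTop _)
    exact tendsto_nhds_unique h1 h3
  have hΘiso : Isometry Θhom := AddMonoidHomClass.isometry_of_norm Θhom hΘnorm
  -- surjectivity
  have hrange_closed : IsClosed (Set.range Θfun) :=
    hΘiso.isClosedEmbedding.isClosed_range
  have hbi : ∀ i, bseq i ∈ Set.range Θfun := by
    intro i
    rw [← hrange_closed.closure_eq]
    refine Metric.mem_closure_iff.2 fun ε hε => ?_
    obtain ⟨n₀, hn₀⟩ := exists_pow_lt_of_lt_one (show (0:ℝ) < ε/4 by linarith) half_lt_one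
    set n := max i n₀ with hndef
    have hin : i ≤ n := le_max_left _ _
    refine ⟨Θfun (cn n i), ⟨cn n i, rfl⟩, ?_⟩
    have e1 : ‖star (Vn (n+1)) * bseq i * Vn (n+1) - P.φ (cn n i)‖ ≤ (1/2:ℝ)^n :=
      (hzspec n).2.2.2.2.1 i hin
    have e2 : bseq i - Vn (n+1) * P.φ (cn n i) * star (Vn (n+1))
        = Vn (n+1) * (star (Vn (n+1)) * bseq i * Vn (n+1) - P.φ (cn n i)) * star (Vn (n+1)) := by
      rw [mul_sub, sub_mul]
      congr 1
      have h9 : Vn (n+1) * (star (Vn (n+1)) * bseq i * Vn (n+1)) * star (Vn (n+1))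
          = (Vn (n+1) * star (Vn (n+1))) * bseq i * (Vn (n+1) * star (Vn (n+1))) := by
        simp only [mul_assoc]
      rw [h9, mul_star_self_one (hVu (n+1)), one_mul, mul_one]
    have e3 : ‖bseq i - F (cn n i) (n+1)‖ ≤ (1/2:ℝ)^n := by
      have : ‖bseq i - F (cn n i) (n+1)‖
          = ‖star (Vn (n+1)) * bseq i * Vn (n+1) - P.φ (cn n i)‖ := by
        rw [show F (cn n i) (n+1) = Vn (n+1) * P.φ (cn n i) * star (Vn (n+1)) from rfl, e2,
          norm_conj (hVu (n+1))]
      rw [this]; exact e1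
    have e4 : ‖Θfun (cn n i) - F (cn n i) (n+1)‖ ≤ (1/2:ℝ)^(n+1) :=
      hΘtail (cn n i) (n+1) (n+1) (hc_mem n i hin) le_rfl
    have e5 : dist (bseq i) (Θfun (cn n i)) ≤ (1/2:ℝ)^n + (1/2:ℝ)^(n+1) := by
      rw [dist_eq_norm]
      calc ‖bseq i - Θfun (cn n i)‖
          ≤ ‖bseq i - F (cn n i) (n+1)‖ + ‖F (cn n i) (n+1) - Θfun (cn n i)‖ :=
            norm_sub_le_norm_sub_add_norm_sub _ _ _
        _ ≤ (1/2:ℝ)^n + (1/2:ℝ)^(n+1) := by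
            refine add_le_add e3 ?_
            rw [← norm_neg, neg_sub]; exact e4
    have e6 : (1/2:ℝ)^n ≤ (1/2:ℝ)^n₀ :=
      pow_le_pow_of_le_one half_nonneg (le_of_lt half_lt_one) (le_max_right _ _)
    have e7 : (1/2:ℝ)^(n+1) ≤ (1/2:ℝ)^n := by
      rw [pow_succ]
      have : (0:ℝ) ≤ (1/2:ℝ)^n := by positivity
      linarith
    calc dist (bseq i) (Θfun (cn n i)) ≤ (1/2:ℝ)^n + (1/2:ℝ)^(n+1) := e5
      _ < ε := by linarith
  have hsurj : Function.Surjective Θfun := by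
    intro y
    have h1 : y ∈ closure (Set.range bseq) := hbseq y
    have h2 : closure (Set.range bseq) ⊆ closure (Set.range Θfun) :=
      closure_mono (Set.range_subset_iff.2 hbi)
    have h3 : y ∈ Set.range Θfun := by
      rw [← hrange_closed.closure_eq]; exact h2 h1
    exact h3
  have hbij : Function.Bijective Θfun := ⟨hΘiso.injective, hsurj⟩
  -- the limit cocycle
  have hβu : ∀ (g : G) (n : ℕ), Sβ.α g (Vn n) ∈ unitary B :=
    fun g n => map_unitary (hVu n)
  have huFu : ∀ (g : G) (n : ℕ), uF g n ∈ unitary B := by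
    intro g n
    exact mul_mem (mul_mem (hVu n) (P.u_mem g)) (Unitary.star_mem (hβu g n))
  have hUstep : ∀ (g : G) (n : ℕ), g ∈ KX n → ‖uF g (n+1) - uF g n‖ ≤ (1/2:ℝ)^(n+1) := by
    intro g n hg
    have hexp : uF g (n+1)
        = Vn n * (zn n 1 * P.u g * star (Sβ.α g (zn n 1))) * star (Sβ.α g (Vn n)) := by
      simp only [huFdef, hVsucc n, map_mul, star_mul, mul_assoc]
    rw [hexp, huFdef]
    simp only []
    rw [norm_sandwich_sub (hVu n) (Unitary.star_mem (hβu g n)), ← norm_neg, neg_sub]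
    exact (hzspec n).2.2.2.2.2 g hg 1 hzIcc1
  have hUbound : ∀ (g : G) (j m n : ℕ), g ∈ KX j → j ≤ n → n ≤ m →
      ‖uF g m - uF g n‖ ≤ (1/2:ℝ)^n := by
    intro g j m n hg hjn hnm
    have h1 := telescope_bound (f := uF g) (N := n)
      (fun k hk => hUstep g k (KX.subset (hjn.trans hk) hg)) m hnm
    have : (0:ℝ) ≤ (1/2:ℝ)^m := by positivity
    linarith
  have hUCauchy : ∀ g : G, ∃ L, Tendsto (uF g) atTop (𝓝 L) := by
    intro g
    refine cauchySeq_tendsto_of_complete (Metric.cauchySeq_iff.2 fun ε hε => ?_)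
    obtain ⟨j, hj⟩ := KX.exists_mem g
    obtain ⟨n₀, hn₀⟩ := exists_pow_lt_of_lt_one hε half_lt_one
    refine ⟨max j n₀, fun m hm n hn => ?_⟩
    have key : ∀ p q, max j n₀ ≤ p → max j n₀ ≤ q → q ≤ p → dist (uF g p) (uF g q) < ε := by
      intro p q hp hq hqp
      rw [dist_eq_norm]
      have h1 := hUbound g j p q hj (le_trans (le_max_left _ _) hq) hqp
      have h2 : (1/2:ℝ)^q ≤ (1/2:ℝ)^n₀ :=
        pow_le_pow_of_le_one half_nonneg (le_of_lt half_lt_one)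
          (le_trans (le_max_right _ _) hq)
      linarith
    rcases le_total n m with h | h
    · exact key m n hm hn h
    · rw [dist_comm]; exact key n m hn hm h
  choose vfun hvf using hUCauchy
  have hvtail : ∀ (g : G) (n : ℕ), g ∈ KX n → ‖vfun g - uF g n‖ ≤ (1/2:ℝ)^n := by
    intro g n hg
    exact tail_bound (hvf g) (fun k hk => hUstep g k (KX.subset hk hg)) n le_rfl
  have hv_unitary : ∀ g, vfun g ∈ unitary B := by
    intro g
    rw [Unitary.mem_iff]
    constructor
    · refine tendsto_nhds_unique ((hvf g).star.mul (hvf g)) ?_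
      have he : ∀ n, star (uF g n) * uF g n = 1 :=
        fun n => star_mul_self_one (huFu g n)
      rw [show (fun n => star (uF g n) * uF g n) = fun _ => (1:B) from funext he]
      exact tendsto_const_nhds
    · refine tendsto_nhds_unique ((hvf g).mul (hvf g).star) ?_
      have he : ∀ n, uF g n * star (uF g n) = 1 :=
        fun n => mul_star_self_one (huFu g n)
      rw [show (fun n => uF g n * star (uF g n)) = fun _ => (1:B) from funext he]
      exact tendsto_const_nhds
  have huFcont : ∀ n, Continuous (fun g => uF g n) := by
    intro n
    exact (continuous_const.mul P.u_cont).mul (continuous_star.comp (Sβ.α_cont (Vn n)))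
  have hv_cont : Continuous vfun := by
    rw [continuous_iff_continuousAt]
    intro g₀
    rw [ContinuousAt, Metric.tendsto_nhds]
    intro ε hε
    obtain ⟨n₀, hn₀⟩ := exists_pow_lt_of_lt_one (show (0:ℝ) < ε/3 by linarith) half_lt_one
    set N := KX.find g₀ with hNdef
    set n := max (N + 1) n₀ with hndef
    have hg₀n : g₀ ∈ KX n := KX.subset (le_trans (Nat.le_succ N) (le_max_left _ _)) (KX.mem_find g₀)
    have hUnhds : interior (KX n) ∈ 𝓝 g₀ := by
      refine isOpen_interior.mem_nhds ?_
      have h1 : g₀ ∈ KX N := KX.mem_find g₀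
      have h2 : KX N ⊆ interior (KX (N + 1)) := KX.subset_interior_succ N
      exact interior_mono (KX.subset (le_max_left _ _)) (h2 h1)
    have hcontn : Tendsto (fun g => uF g n) (𝓝 g₀) (𝓝 (uF g₀ n)) :=
      (huFcont n).continuousAt
    have hev2 : ∀ᶠ g in 𝓝 g₀, dist (uF g n) (uF g₀ n) < ε/3 :=
      hcontn (Metric.ball_mem_nhds _ (by linarith))
    filter_upwards [hUnhds, hev2] with g hg1 hg2
    have hgKX : g ∈ KX n := interior_subset hg1
    have d1 : dist (vfun g) (uF g n) ≤ (1/2:ℝ)^n := by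
      rw [dist_eq_norm]; exact hvtail g n hgKX
    have d3 : dist (uF g₀ n) (vfun g₀) ≤ (1/2:ℝ)^n := by
      rw [dist_comm, dist_eq_norm]; exact hvtail g₀ n hg₀n
    have dtr : dist (vfun g) (vfun g₀)
        ≤ dist (vfun g) (uF g n) + dist (uF g n) (uF g₀ n) + dist (uF g₀ n) (vfun g₀) :=
      dist_triangle4 _ _ _ _
    have hle : (1/2:ℝ)^n ≤ (1/2:ℝ)^n₀ :=
      pow_le_pow_of_le_one half_nonneg (le_of_lt half_lt_one) (le_max_right _ _)
    linarith
  -- equivariance of the limit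
  have hβcont : ∀ g : G, Continuous (Sβ.α g) :=
    fun g => (StarAlgEquiv.isometry (Sβ.α g)).continuous
  have hequiv : ∀ (g : G) (a : A),
      vfun g * Sβ.α g (Θfun a) * star (vfun g) = Θfun (Sα.α g a) := by
    intro g a
    have hseq : ∀ n, uF g n * Sβ.α g (F a n) * star (uF g n) = F (Sα.α g a) n := by
      intro n
      have hcan : ∀ w : B, star (Sβ.α g (Vn n)) * (Sβ.α g (Vn n) * w) = w := by
        intro w
        rw [← mul_assoc, star_mul_self_one (hβu g n), one_mul]
      have expand : uF g n * Sβ.α g (F a n) * star (uF g n)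
          = Vn n * (P.u g * Sβ.α g (P.φ a) * star (P.u g)) * star (Vn n) := by
        simp only [huFdef, hFdef, map_mul, map_star, star_mul, star_star, mul_assoc, hcan]
      rw [expand, P.equivariance g a]
    have t1 : Tendsto (fun n => uF g n * Sβ.α g (F a n) * star (uF g n)) atTop
        (𝓝 (vfun g * Sβ.α g (Θfun a) * star (vfun g))) :=
      ((hvf g).mul (((hβcont g).tendsto _).comp (hΘ a))).mul (hvf g).star
    have t2 : Tendsto (fun n => uF g n * Sβ.α g (F a n) * star (uF g n)) atTop
        (𝓝 (Θfun (Sα.α g a))) := by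
      rw [show (fun n => uF g n * Sβ.α g (F a n) * star (uF g n)) = F (Sα.α g a)
        from funext hseq]
      exact hΘ _
    exact tendsto_nhds_unique t1 t2
  -- the cocycle identity for the limit
  have hplusP : ∀ x, plusMap P.φ x = P.φ x := by
    intro x
    rw [plusMap, hunital, add_sub_cancel_right]
  have hPcoc : ∀ g h : G,
      P.φ (Sα.u g h) = P.u g * Sβ.α g (P.u h) * Sβ.u g h * star (P.u (g * h)) := by
    intro g h
    rw [← hplusP (Sα.u g h)]
    exact P.cocycle g h
  have hcoc : ∀ g h : G, plusMap Θhom (Sα.u g h)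
      = vfun g * Sβ.α g (vfun h) * Sβ.u g h * star (vfun (g * h)) := by
    intro g h
    have hplusΘ : plusMap Θhom (Sα.u g h) = Θfun (Sα.u g h) := by
      rw [plusMap, show Θhom 1 = 1 from hΘone, add_sub_cancel_right]
      rfl
    have hseq : ∀ n, uF g n * Sβ.α g (uF h n) * Sβ.u g h * star (uF (g * h) n)
        = F (Sα.u g h) n := by
      intro n
      have hcan1 : ∀ w : B, star (Sβ.α g (Vn n)) * (Sβ.α g (Vn n) * w) = w := by
        intro w
        rw [← mul_assoc, star_mul_self_one (hβu g n), one_mul]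
      have hcan2 : ∀ w : B, star (Sβ.u g h) * (Sβ.u g h * w) = w := by
        intro w
        rw [← mul_assoc, star_mul_self_one (Sβ.u_mem g h), one_mul]
      have hcan3 : ∀ w : B, star (Sβ.α (g * h) (Vn n)) * (Sβ.α (g * h) (Vn n) * w) = w := by
        intro w
        rw [← mul_assoc, star_mul_self_one (hβu (g * h) n), one_mul]
      have hsub : star (Sβ.α g (Sβ.α h (Vn n)))
          = Sβ.u g h * (star (Sβ.α (g * h) (Vn n)) * star (Sβ.u g h)) := by
        rw [Sβ.α_mul g h (Vn n)]
        simp only [star_mul, star_star, mul_assoc]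
      rw [show F (Sα.u g h) n = Vn n * P.φ (Sα.u g h) * star (Vn n) from rfl, hPcoc g h]
      simp only [huFdef, map_mul, map_star, star_mul, star_star, mul_assoc,
        hsub, hcan1, hcan2, hcan3]
    have t1 : Tendsto (fun n => uF g n * Sβ.α g (uF h n) * Sβ.u g h * star (uF (g * h) n))
        atTop (𝓝 (vfun g * Sβ.α g (vfun h) * Sβ.u g h * star (vfun (g * h)))) :=
      (((hvf g).mul (((hβcont g).tendsto _).comp (hvf h))).mul tendsto_const_nhds).mul
        (hvf (g * h)).star
    have t2 : Tendsto (fun n => uF g n * Sβ.α g (uF h n) * Sβ.u g h * star (uF (g * h) n))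
        atTop (𝓝 (Θfun (Sα.u g h))) := by
      rw [show (fun n => uF g n * Sβ.α g (uF h n) * Sβ.u g h * star (uF (g * h) n))
        = F (Sα.u g h) from funext hseq]
      exact hΘ _
    rw [hplusΘ]
    exact tendsto_nhds_unique t2 t1
  -- assemble the cocycle conjugacy
  set Θc : CocycleMorphism Sα Sβ :=
    { φ := Θhom
      u := vfun
      u_mem := hv_unitary
      u_cont := hv_cont
      equivariance := hequiv
      cocycle := hcoc } with hΘcdef
  refine ⟨Θc, hbij, ?_⟩
  -- the asymptotic intertwining path
  set W : ℝ → B := fun t => Vn ⌊t⌋₊ * zn ⌊t⌋₊ (t - ⌊t⌋₊) with hWdef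
  have hgcont : ∀ n : ℕ, Continuous (fun t : ℝ => Vn n * zn n (t - n)) := by
    intro n
    exact continuous_const.mul ((hzspec n).1.comp (continuous_id.sub continuous_const))
  have hW0eq : Set.EqOn W (fun t : ℝ => Vn 0 * zn 0 (t - (0:ℕ))) (Set.Iic (1:ℝ)) := by
    intro t ht
    rcases lt_or_eq_of_le (Set.mem_Iic.1 ht) with hlt | heq
    · have hfl : ⌊t⌋₊ = 0 := Nat.floor_eq_zero.2 hlt
      simp only [hWdef, hfl]
    · subst heq
      have hfl : ⌊(1:ℝ)⌋₊ = 1 := Nat.floor_one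
      simp only [hWdef, hfl, Nat.cast_one, Nat.cast_zero, sub_self, sub_zero]
      rw [(hzspec 1).2.2.1, mul_one, hVsucc 0]
  have hWneq : ∀ n : ℕ, Set.EqOn W (fun t : ℝ => Vn (n+1) * zn (n+1) (t - ((n+1:ℕ):ℝ)))
      (Set.Icc ((n:ℝ)+1) ((n:ℝ)+2)) := by
    intro n t ht
    rcases lt_or_eq_of_le ht.2 with hlt | heq
    · have h0 : (0:ℝ) ≤ t := by
        have : (0:ℝ) ≤ (n:ℝ) + 1 := by positivity
        linarith [ht.1]
      have hfl : ⌊t⌋₊ = n + 1 := by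
        rw [Nat.floor_eq_iff h0]
        constructor
        · push_cast; linarith [ht.1]
        · push_cast; linarith
      simp only [hWdef, hfl]
    · subst heq
      have hc : ((n:ℝ) + 2) = ((n + 2 : ℕ) : ℝ) := by push_cast; ring
      have hfl : ⌊(n:ℝ) + 2⌋₊ = n + 2 := by rw [hc, Nat.floor_natCast]
      simp only [hWdef, hfl]
      have h1 : ((n:ℝ) + 2) - ((n + 2 : ℕ) : ℝ) = 0 := by push_cast; ring
      have h2 : ((n:ℝ) + 2) - ((n + 1 : ℕ) : ℝ) = 1 := by push_cast; ring
      rw [h1, h2, (hzspec (n+2)).2.2.1, mul_one, hVsucc (n+1)]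
  have hWIic : ∀ N : ℕ, ContinuousOn W (Set.Iic ((N:ℝ)+1)) := by
    intro N
    induction N with
    | zero =>
      have h1 : ((0:ℕ):ℝ) + 1 = (1:ℝ) := by norm_num
      rw [h1]
      exact (hgcont 0).continuousOn.congr hW0eq
    | succ N ih =>
      have hsplit : Set.Iic (((N+1:ℕ):ℝ)+1)
          = Set.Iic ((N:ℝ)+1) ∪ Set.Icc ((N:ℝ)+1) ((N:ℝ)+2) := by
        rw [Set.Iic_union_Icc_eq_Iic (by linarith : (N:ℝ)+1 ≤ (N:ℝ)+2)]
        congr 1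
        push_cast; ring
      rw [hsplit]
      exact continuousOn_union_closed isClosed_Iic isClosed_Icc ih
        ((hgcont (N+1)).continuousOn.congr (hWneq N))
  have hWcont : Continuous W := by
    rw [continuous_iff_continuousAt]
    intro x
    obtain ⟨N, hN⟩ := exists_nat_gt x
    refine (hWIic N).continuousAt ?_
    refine Filter.mem_of_superset (Iio_mem_nhds (by linarith : x < (N:ℝ)+1)) ?_
    exact Set.Iio_subset_Iic_self
  have hWu : ∀ t, W t ∈ unitary B := fun t => mul_mem (hVu _) ((hzspec _).2.1 _)
  have hfloor_mem : ∀ t : ℝ, 0 ≤ t → (t - (⌊t⌋₊:ℝ)) ∈ Set.Icc (0:ℝ) 1 := by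
    intro t ht
    constructor
    · linarith [Nat.floor_le ht]
    · linarith [Nat.lt_floor_add_one t]
  -- condition 1 of asymptotic equivalence
  have hcond1 : ∀ a : A,
      Tendsto (fun t => ‖Θfun a - W t * P.φ a * star (W t)‖) atTop (𝓝 0) := by
    intro a
    refine tendsto_zero_of_eventually_le (fun t => norm_nonneg _) fun ε hε => ?_
    obtain ⟨j, hj⟩ := haseq.exists_dist_lt a (show (0:ℝ) < ε/4 by linarith)
    obtain ⟨n₀, hn₀⟩ := exists_pow_lt_of_lt_one (show (0:ℝ) < ε/8 by linarith) half_lt_one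
    set N := max j n₀ with hNdef
    rw [eventually_atTop]
    refine ⟨(N:ℝ), fun t ht => ?_⟩
    have ht0 : (0:ℝ) ≤ t := le_trans (Nat.cast_nonneg N) ht
    have hNn : N ≤ ⌊t⌋₊ := Nat.le_floor ht
    set n := ⌊t⌋₊ with hndef
    have hjn : j ≤ n := le_trans (le_max_left _ _) hNn
    have hsIcc : (t - (n:ℝ)) ∈ Set.Icc (0:ℝ) 1 := hfloor_mem t ht0
    have hdista : ‖a - aseq j‖ < ε/4 := by rwa [← dist_eq_norm]
    have e1 : ‖Θfun a - Θfun (aseq j)‖ ≤ ε/4 := by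
      have h1 : Θfun a - Θfun (aseq j) = Θfun (a - aseq j) := by
        rw [← hΘapp, ← hΘapp, ← map_sub, hΘapp]
      rw [h1, hΘnorm]
      linarith
    have e2 : ‖W t * P.φ (aseq j) * star (W t) - W t * P.φ a * star (W t)‖ ≤ ε/4 := by
      rw [norm_conj_sub (hWu t)]
      refine le_trans (hφcontr _ _) ?_
      rw [← norm_neg, neg_sub]
      linarith
    have hWexp : W t * P.φ (aseq j) * star (W t)
        = Vn n * (zn n (t - (n:ℝ)) * P.φ (aseq j) * star (zn n (t - (n:ℝ)))) * star (Vn n) := by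
      simp only [hWdef, star_mul, mul_assoc]
      rfl
    have e3 : ‖Θfun (aseq j) - W t * P.φ (aseq j) * star (W t)‖
        ≤ (1/2:ℝ)^n + (1/2:ℝ)^(n+1) := by
      calc ‖Θfun (aseq j) - W t * P.φ (aseq j) * star (W t)‖
          ≤ ‖Θfun (aseq j) - F (aseq j) n‖
            + ‖F (aseq j) n - W t * P.φ (aseq j) * star (W t)‖ :=
            norm_sub_le_norm_sub_add_norm_sub _ _ _
        _ ≤ (1/2:ℝ)^n + (1/2:ℝ)^(n+1) := by
            refine add_le_add (hΘtail (aseq j) n n (ha_mem j n hjn) le_rfl) ?_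
            rw [hWexp, show F (aseq j) n = Vn n * P.φ (aseq j) * star (Vn n) from rfl,
              norm_conj_sub (hVu n), ← norm_neg, neg_sub,
              ← norm_commutator ((hzspec n).2.1 _)]
            exact (hzspec n).2.2.2.1 (aseq j) (ha_mem j n hjn) _ hsIcc
    have e4 : (1/2:ℝ)^n ≤ (1/2:ℝ)^n₀ :=
      pow_le_pow_of_le_one half_nonneg (le_of_lt half_lt_one)
        (le_trans (le_max_right _ _) hNn)
    have e5 : (1/2:ℝ)^(n+1) ≤ (1/2:ℝ)^n := by
      rw [pow_succ]
      have : (0:ℝ) ≤ (1/2:ℝ)^n := by positivity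
      linarith
    calc ‖Θfun a - W t * P.φ a * star (W t)‖
        ≤ ‖Θfun a - Θfun (aseq j)‖
          + ‖Θfun (aseq j) - W t * P.φ a * star (W t)‖ :=
          norm_sub_le_norm_sub_add_norm_sub _ _ _
      _ ≤ ‖Θfun a - Θfun (aseq j)‖ + (‖Θfun (aseq j) - W t * P.φ (aseq j) * star (W t)‖
          + ‖W t * P.φ (aseq j) * star (W t) - W t * P.φ a * star (W t)‖) := by
          have := norm_sub_le_norm_sub_add_norm_sub (Θfun (aseq j))
            (W t * P.φ (aseq j) * star (W t)) (W t * P.φ a * star (W t))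
          linarith
      _ ≤ ε := by linarith
  -- condition 2 of asymptotic equivalence
  have hcond2 : ∀ K : Set G, IsCompact K → ∀ ε > (0:ℝ), ∀ᶠ t in atTop,
      ∀ g ∈ K, ‖vfun g - W t * P.u g * star (Sβ.α g (W t))‖ ≤ ε := by
    intro K hK ε hε
    obtain ⟨m, hm⟩ := KX.exists_superset_of_isCompact hK
    obtain ⟨n₀, hn₀⟩ := exists_pow_lt_of_lt_one (show (0:ℝ) < ε/4 by linarith) half_lt_one
    set N := max m n₀ with hNdef
    rw [eventually_atTop]
    refine ⟨(N:ℝ), fun t ht g hg => ?_⟩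
    have ht0 : (0:ℝ) ≤ t := le_trans (Nat.cast_nonneg N) ht
    have hNn : N ≤ ⌊t⌋₊ := Nat.le_floor ht
    set n := ⌊t⌋₊ with hndef
    have hgn : g ∈ KX n := KX.subset (le_trans (le_max_left _ _) hNn) (hm hg)
    have hsIcc : (t - (n:ℝ)) ∈ Set.Icc (0:ℝ) 1 := hfloor_mem t ht0
    have hWexp : W t * P.u g * star (Sβ.α g (W t))
        = Vn n * (zn n (t - (n:ℝ)) * P.u g * star (Sβ.α g (zn n (t - (n:ℝ)))))
          * star (Sβ.α g (Vn n)) := by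
      simp only [hWdef, map_mul, star_mul, mul_assoc]
      rfl
    have e1 : ‖vfun g - uF g n‖ ≤ (1/2:ℝ)^n := hvtail g n hgn
    have e2 : ‖uF g n - W t * P.u g * star (Sβ.α g (W t))‖ ≤ (1/2:ℝ)^(n+1) := by
      rw [hWexp, show uF g n = Vn n * P.u g * star (Sβ.α g (Vn n)) from rfl,
        norm_sandwich_sub (hVu n) (Unitary.star_mem (hβu g n))]
      exact (hzspec n).2.2.2.2.2 g hgn _ hsIcc
    have e4 : (1/2:ℝ)^n ≤ (1/2:ℝ)^n₀ :=
      pow_le_pow_of_le_one half_nonneg (le_of_lt half_lt_one)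
        (le_trans (le_max_right _ _) hNn)
    have e5 : (1/2:ℝ)^(n+1) ≤ (1/2:ℝ)^n := by
      rw [pow_succ]
      have : (0:ℝ) ≤ (1/2:ℝ)^n := by positivity
      linarith
    calc ‖vfun g - W t * P.u g * star (Sβ.α g (W t))‖
        ≤ ‖vfun g - uF g n‖ + ‖uF g n - W t * P.u g * star (Sβ.α g (W t))‖ :=
          norm_sub_le_norm_sub_add_norm_sub _ _ _
      _ ≤ ε := by linarith
  exact ⟨W, hWcont, hWu, hcond1, hcond2⟩

end Backward
end AUEAux

/-- A cocycle morphism `(φ,u)` between twisted actions on separable unital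
C*-algebras with `φ` injective and unital is asymptotically unitarily equivalent to a cocycle
conjugacy if and only if for all finite sets `F_A ⊆ A`, `F_B ⊆ B`, every compact `K ⊆ G` and
every `ε > 0` there is a norm-continuous path of unitaries `z : [0,1] → U(B)` with `z_0 = 1`
which `ε`-commutes with `φ(F_A)`, conjugates `F_B` to within `ε` of `φ(A)` at `t = 1`, and
`ε`-fixes the cocycle `u` over `K`. -/
theorem asympUEquiv_cocycleConjugacy_iff
    {G A B : Type*} [Group G] [TopologicalSpace G] [IsTopologicalGroup G]
    [LocallyCompactSpace G] [SecondCountableTopology G] [T2Space G]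
    [CStarAlgebra A] [CStarAlgebra B]
    [TopologicalSpace.SeparableSpace A] [TopologicalSpace.SeparableSpace B]
    (Sα : TwistedAction G A) (Sβ : TwistedAction G B)
    (P : CocycleMorphism Sα Sβ)
    (hinj : Function.Injective P.φ) (hunital : P.φ 1 = 1) :
    (∃ Θ : CocycleMorphism Sα Sβ, Function.Bijective Θ.φ ∧
        AsympUEquiv Sβ P.φ P.u Θ.φ Θ.u)
    ↔ (∀ (FA : Finset A) (FB : Finset B) (K : Set G), IsCompact K → ∀ ε > (0 : ℝ),
        ∃ z : ℝ → B, Continuous z ∧ (∀ t, z t ∈ unitary B) ∧ z 0 = 1 ∧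
          (∀ a ∈ FA, ∀ t ∈ Set.Icc (0 : ℝ) 1, ‖z t * P.φ a - P.φ a * z t‖ ≤ ε) ∧
          (∀ b ∈ FB, Metric.infDist (star (z 1) * b * z 1) (Set.range P.φ) ≤ ε) ∧
          (∀ g ∈ K, ∀ t ∈ Set.Icc (0 : ℝ) 1,
            ‖P.u g - z t * P.u g * star (Sβ.α g (z t))‖ ≤ ε)) := by
  constructor
  · intro h
    exact AUEAux.forward h
  · intro h
    exact AUEAux.backward hinj hunital h
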